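/- For every n >= 0 there is an explicit bijection phi between the set of GDAP of length n bounded between y = -1 and y = 1 and the set of compositions of n + 3 whose first part is odd, whose last part is even, and in which no two consecutive parts have the same parity. -/

import Mathlib

open PowerSeries

/-- A valid step sequence: each step is an up-step `1` or a down-step `-k` (`k ≥ 1`),
and no two down-steps are consecutive. -/
def GoodSteps (p : List ℤ) : Prop :=
  (∀ s ∈ p, s = 1 ∨ s ≤ -1) ∧ List.Chain' (fun a b => a = 1 ∨ b = 1) p

/-- A Dyck path with air pockets: nonempty, valid steps, ends on the x-axis,
stays weakly above the x-axis. -/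
def IsDAP (p : List ℤ) : Prop :=
  p ≠ [] ∧ GoodSteps p ∧ p.sum = 0 ∧ ∀ i, 0 ≤ (p.take i).sum

/-- A grand Dyck path with air pockets: valid steps, ends on the x-axis
(possibly going below it); the empty path is allowed. -/
def IsGDAP (p : List ℤ) : Prop := GoodSteps p ∧ p.sum = 0

/-- Number of DAP of length `n`. -/
noncomputable def dapCount (n : ℕ) : ℕ :=
  Nat.card {p : List ℤ // IsDAP p ∧ p.length = n}

/-- All points of the path have ordinate in `[-1,1]`. -/
def Bounded11 (p : List ℤ) : Prop := ∀ i, -1 ≤ (p.take i).sum ∧ (p.take i).sum ≤ 1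

/-- `c` is a composition of `m`. -/
def IsComposition (c : List ℕ) (m : ℕ) : Prop := (∀ x ∈ c, 0 < x) ∧ c.sum = m

/-- No two consecutive parts have the same parity. -/
def AltParity (c : List ℕ) : Prop := List.Chain' (fun a b => a % 2 ≠ b % 2) c

/-! ### The intermediate encoding

A bounded GDAP decomposes uniquely as segments `C^a A^b` (with `C = [-1,1]`,
`A = [1,-1]`) joined by separators `B = [1,-2,1]`.  A segment with data `(a,b)`
matches the pair of composition parts `(2a+1, 2b+2)`. -/

def seg : ℕ → ℕ → List ℤ
  | a+1, b => -1 :: 1 :: seg a b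
  | 0, b+1 => 1 :: -1 :: seg 0 b
  | 0, 0 => []

def pathOf : List (ℕ × ℕ) → List ℤ
  | [] => []
  | [(a,b)] => seg a b
  | (a,b) :: x :: l => seg a b ++ 1 :: -2 :: 1 :: pathOf (x :: l)

def bump1 : List (ℕ × ℕ) → List (ℕ × ℕ)
  | (a,b) :: r => (a+1,b) :: r
  | [] => []

def bump2 : List (ℕ × ℕ) → List (ℕ × ℕ)
  | (_,b) :: r => (0,b+1) :: r
  | [] => []

def decode : List ℤ → List (ℕ × ℕ)
  | -1 :: 1 :: p => bump1 (decode p)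
  | 1 :: -1 :: p => bump2 (decode p)
  | 1 :: -2 :: 1 :: p => (0,0) :: decode p
  | [] => [(0,0)]
  | _ => []

def compOf : List (ℕ × ℕ) → List ℕ
  | [] => []
  | (a,b) :: r => (2*a+1) :: (2*b+2) :: compOf r

/-! ### Step lemmas for `pathOf` -/

lemma pathOf_step1 (a b : ℕ) (r : List (ℕ × ℕ)) :
    pathOf ((a+1,b) :: r) = -1 :: 1 :: pathOf ((a,b) :: r) := by
  cases r <;> simp [pathOf, seg]

lemma pathOf_step2 (b : ℕ) (r : List (ℕ × ℕ)) :
    pathOf ((0,b+1) :: r) = 1 :: -1 :: pathOf ((0,b) :: r) := by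
  cases r <;> simp [pathOf, seg]

lemma pathOf_step3 (x : ℕ × ℕ) (r : List (ℕ × ℕ)) :
    pathOf ((0,0) :: x :: r) = 1 :: -2 :: 1 :: pathOf (x :: r) := by
  simp [pathOf, seg]

/-- A recursion principle matching the three step lemmas. -/
lemma pathOf_rec {C : List (ℕ × ℕ) → Prop}
    (h0 : C [(0,0)])
    (h1 : ∀ a b r, C ((a,b)::r) → C ((a+1,b)::r))
    (h2 : ∀ b r, C ((0,b)::r) → C ((0,b+1)::r))
    (h3 : ∀ x r, C (x::r) → C ((0,0)::x::r)) :
    ∀ l : List (ℕ × ℕ), l ≠ [] → C l := by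
  intro l
  induction l with
  | nil => intro h; exact absurd rfl h
  | cons x r IHr =>
    intro _
    obtain ⟨a, b⟩ := x
    induction a with
    | succ a IHa => exact h1 a b r (IHa (by simp))
    | zero =>
      induction b with
      | succ b IHb => exact h2 b r (IHb (by simp))
      | zero =>
        cases r with
        | nil => exact h0
        | cons y r' => exact h3 y r' (IHr (by simp))

lemma decode_pathOf : ∀ l : List (ℕ × ℕ), l ≠ [] → decode (pathOf l) = l := by
  refine pathOf_rec ?_ ?_ ?_ ?_
  · simp [pathOf, seg, decode]
  · intro a b r ih
    rw [pathOf_step1,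
      show decode (-1 :: 1 :: pathOf ((a,b)::r)) = bump1 (decode (pathOf ((a,b)::r))) from rfl,
      ih]
    rfl
  · intro b r ih
    rw [pathOf_step2,
      show decode (1 :: -1 :: pathOf ((0,b)::r)) = bump2 (decode (pathOf ((0,b)::r))) from rfl,
      ih]
    rfl
  · intro x r ih
    rw [pathOf_step3,
      show decode (1 :: -2 :: 1 :: pathOf (x::r)) = (0,0) :: decode (pathOf (x::r)) from rfl,
      ih]

/-! ### Properties of `pathOf` -/

lemma pathOf_sum : ∀ l : List (ℕ × ℕ), l ≠ [] → (pathOf l).sum = 0 := by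
  refine pathOf_rec ?_ ?_ ?_ ?_
  · simp [pathOf, seg]
  · intro a b r ih; rw [pathOf_step1]; simp [ih]
  · intro b r ih; rw [pathOf_step2]; simp [ih]
  · intro x r ih; rw [pathOf_step3]; simp [ih]

lemma pathOf_mem : ∀ l : List (ℕ × ℕ), l ≠ [] →
    ∀ s ∈ pathOf l, s = 1 ∨ s ≤ -1 := by
  refine pathOf_rec ?_ ?_ ?_ ?_
  · simp [pathOf, seg]
  · intro a b r ih; rw [pathOf_step1]; intro s hs
    simp only [List.mem_cons] at hs
    rcases hs with rfl | rfl | h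
    · right; omega
    · left; rfl
    · exact ih s h
  · intro b r ih; rw [pathOf_step2]; intro s hs
    simp only [List.mem_cons] at hs
    rcases hs with rfl | rfl | h
    · left; rfl
    · right; omega
    · exact ih s h
  · intro x r ih; rw [pathOf_step3]; intro s hs
    simp only [List.mem_cons] at hs
    rcases hs with rfl | rfl | rfl | h
    · left; rfl
    · right; omega
    · left; rfl
    · exact ih s h

/-- If the first coordinate of the first block is `0`, the path starts with an up-step
(or is empty). -/
lemma pathOf_head0 (b : ℕ) (r : List (ℕ × ℕ)) :
    ∀ y ∈ (pathOf ((0,b)::r)).head?, y = (1 : ℤ) := by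
  cases b with
  | succ b => rw [pathOf_step2]; simp
  | zero =>
    cases r with
    | nil => simp [pathOf, seg]
    | cons x r' => rw [pathOf_step3]; simp

lemma pathOf_chain : ∀ l : List (ℕ × ℕ), l ≠ [] →
    List.Chain' (fun a b => a = 1 ∨ b = 1) (pathOf l) := by
  refine pathOf_rec ?_ ?_ ?_ ?_
  · simp [pathOf, seg, List.Chain']
  · intro a b r ih; rw [pathOf_step1]
    rw [List.Chain', List.isChain_cons, List.isChain_cons]
    refine ⟨?_, fun y _ => Or.inl rfl, ih⟩
    intro y hy
    rcases (pathOf ((a,b)::r)).head? with _ | z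
    · simp at hy; omega
    · simp at hy; omega
  · intro b r ih; rw [pathOf_step2]
    rw [List.Chain', List.isChain_cons, List.isChain_cons]
    refine ⟨fun y _ => Or.inl rfl, ?_, ih⟩
    intro y hy
    right; exact pathOf_head0 b r y hy
  · intro x r ih; rw [pathOf_step3]
    rw [List.Chain', List.isChain_cons, List.isChain_cons, List.isChain_cons]
    refine ⟨fun y _ => Or.inl rfl, ?_, fun y _ => Or.inl rfl, ih⟩
    intro y hy
    simp at hy; right; omega

lemma bounded_cons2 (x y : ℤ) (p : List ℤ) (hx : -1 ≤ x ∧ x ≤ 1)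
    (hxy : x + y = 0) (hp : Bounded11 p) : Bounded11 (x :: y :: p) := by
  intro i
  match i with
  | 0 => simp
  | 1 => simpa using hx
  | (n+2) =>
    simp only [List.take_succ_cons, List.sum_cons]
    have := hp n
    constructor <;> linarith [this.1, this.2]

lemma bounded_cons3 (x y z : ℤ) (p : List ℤ) (hx : -1 ≤ x ∧ x ≤ 1)
    (hxy : -1 ≤ x + y ∧ x + y ≤ 1) (hxyz : x + y + z = 0) (hp : Bounded11 p) :
    Bounded11 (x :: y :: z :: p) := by
  intro i
  match i with
  | 0 => simp
  | 1 => simpa using hx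
  | 2 =>
    simp only [List.take_succ_cons, List.take_zero, List.sum_cons, List.sum_nil, add_zero]
    constructor <;> linarith [hxy.1, hxy.2]
  | (n+3) =>
    simp only [List.take_succ_cons, List.sum_cons]
    have := hp n
    constructor <;> linarith [this.1, this.2]

lemma pathOf_bounded : ∀ l : List (ℕ × ℕ), l ≠ [] → Bounded11 (pathOf l) := by
  refine pathOf_rec ?_ ?_ ?_ ?_
  · intro i; simp [pathOf, seg]
  · intro a b r ih; rw [pathOf_step1]
    exact bounded_cons2 _ _ _ (by norm_num) (by norm_num) ih
  · intro b r ih; rw [pathOf_step2]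
    exact bounded_cons2 _ _ _ (by norm_num) (by norm_num) ih
  · intro x r ih; rw [pathOf_step3]
    exact bounded_cons3 _ _ _ _ (by norm_num) (by norm_num) (by norm_num) ih

/-! ### Properties of `compOf` -/

lemma compOf_pos : ∀ l : List (ℕ × ℕ), ∀ x ∈ compOf l, 0 < x := by
  intro l
  induction l with
  | nil => simp [compOf]
  | cons x r ih =>
    obtain ⟨a, b⟩ := x
    intro y hy
    simp only [compOf, List.mem_cons] at hy
    rcases hy with rfl | rfl | h
    · omega
    · omega
    · exact ih y h

lemma compOf_head_mod (l : List (ℕ × ℕ)) :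
    ∀ y ∈ (compOf l).head?, y % 2 = 1 := by
  cases l with
  | nil => simp [compOf]
  | cons x r => obtain ⟨a, b⟩ := x; simp [compOf]

lemma compOf_alt : ∀ l : List (ℕ × ℕ), AltParity (compOf l) := by
  intro l
  induction l with
  | nil => simp [compOf, AltParity, List.Chain']
  | cons x r ih =>
    obtain ⟨a, b⟩ := x
    show List.Chain' _ ((2*a+1) :: (2*b+2) :: compOf r)
    rw [List.Chain', List.isChain_cons, List.isChain_cons]
    refine ⟨by simp, ?_, ih⟩
    intro y hy
    have := compOf_head_mod r y hy
    omega

lemma compOf_last : ∀ l : List (ℕ × ℕ), l ≠ [] →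
    ∃ x, (compOf l).getLast? = some x ∧ Even x := by
  intro l
  induction l with
  | nil => intro h; exact absurd rfl h
  | cons x r ih =>
    intro _
    obtain ⟨a, b⟩ := x
    cases r with
    | nil => exact ⟨2*b+2, by simp [compOf], ⟨b+1, by ring⟩⟩
    | cons z r' =>
      obtain ⟨x, hx, he⟩ := ih (by simp)
      refine ⟨x, ?_, he⟩
      obtain ⟨c, d⟩ := z
      show ((2*a+1) :: (2*b+2) :: (2*c+1) :: (2*d+2) :: compOf r').getLast? = some x
      rw [List.getLast?_cons_cons, List.getLast?_cons_cons]
      exact hx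

lemma compOf_sum : ∀ l : List (ℕ × ℕ), l ≠ [] →
    (compOf l).sum = (pathOf l).length + 3 := by
  refine pathOf_rec ?_ ?_ ?_ ?_
  · simp [compOf, pathOf, seg]
  · intro a b r ih
    have h1 : (compOf ((a+1,b)::r)).sum = (compOf ((a,b)::r)).sum + 2 := by
      simp [compOf]; ring
    rw [h1, pathOf_step1]
    simp only [List.length_cons]
    omega
  · intro b r ih
    have h1 : (compOf ((0,b+1)::r)).sum = (compOf ((0,b)::r)).sum + 2 := by
      simp [compOf]; ring
    rw [h1, pathOf_step2]
    simp only [List.length_cons]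
    omega
  · intro x r ih
    have h1 : (compOf ((0,0)::x::r)).sum = (compOf (x::r)).sum + 3 := by
      obtain ⟨c, d⟩ := x
      simp [compOf]; ring
    rw [h1, pathOf_step3]
    simp only [List.length_cons]
    omega

lemma compOf_inj : ∀ l l' : List (ℕ × ℕ), compOf l = compOf l' → l = l' := by
  intro l
  induction l with
  | nil =>
    intro l' h
    cases l' with
    | nil => rfl
    | cons y r' => obtain ⟨c, d⟩ := y; simp [compOf] at h
  | cons x r ih =>
    intro l' h
    obtain ⟨a, b⟩ := x
    cases l' with
    | nil => simp [compOf] at h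
    | cons y r' =>
      obtain ⟨c, d⟩ := y
      simp only [compOf, List.cons.injEq] at h
      obtain ⟨h1, h2, h3⟩ := h
      have : a = c := by omega
      have : b = d := by omega
      subst_vars
      rw [ih r' h3]

/-! ### Surjectivity on the path side -/

lemma path_surj : ∀ n : ℕ, ∀ p : List ℤ, p.length = n → GoodSteps p → p.sum = 0 →
    Bounded11 p → ∃ l, l ≠ [] ∧ pathOf l = p := by
  intro n
  induction n using Nat.strong_induction_on with
  | _ n IH =>
  intro p hlen hg hs hb
  cases p with
  | nil => exact ⟨[(0,0)], by simp, by simp [pathOf, seg]⟩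
  | cons s q =>
    rcases hg.1 s (by simp) with rfl | hneg
    · -- first step is an up-step
      cases q with
      | nil => simp at hs
      | cons t q' =>
        have ht : t = -1 ∨ t = -2 := by
          have h1 := (hb 2).1
          have h2 := (hb 2).2
          simp only [List.take_succ_cons, List.take_zero, List.sum_cons, List.sum_nil,
            add_zero] at h1 h2
          rcases hg.1 t (by simp) with rfl | hneg'
          · omega
          · omega
        rcases ht with rfl | rfl
        · -- p = 1 :: -1 :: q'
          have hgq : GoodSteps q' :=
            ⟨fun x hx => hg.1 x (by simp [hx]),
             (List.isChain_cons.mp (List.isChain_cons.mp hg.2).2).2⟩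
          have hsq : q'.sum = 0 := by simp at hs; linarith
          have hbq : Bounded11 q' := by
            intro i
            have h := hb (i + 2)
            simp only [List.take_succ_cons, List.sum_cons] at h
            constructor <;> linarith [h.1, h.2]
          obtain ⟨l2, hl2ne, hl2⟩ :=
            IH q'.length (by simp at hlen; omega) q' rfl hgq hsq hbq
          obtain ⟨⟨a, b⟩, r, rfl⟩ :
              ∃ x r, l2 = x :: r := by
            cases l2 with
            | nil => exact absurd rfl hl2ne
            | cons x r => exact ⟨x, r, rfl⟩
          have ha : a = 0 := by
            cases a with
            | zero => rfl
            | succ a2 =>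
              exfalso
              have hhd : q'.head? = some (-1) := by rw [← hl2, pathOf_step1]; rfl
              have := (List.isChain_cons.mp (List.isChain_cons.mp hg.2).2).1 (-1)
                (by rw [hhd]; simp)
              rcases this with h | h <;> norm_num at h
          subst ha
          exact ⟨(0,b+1)::r, by simp, by rw [pathOf_step2, hl2]⟩
        · -- p = 1 :: -2 :: q'
          cases q' with
          | nil => norm_num at hs
          | cons u q'' =>
            have hu : u = 1 := by
              have := (List.isChain_cons.mp (List.isChain_cons.mp hg.2).2).1 u (by simp)
              rcases this with h | h
              · norm_num at h
              · exact h
            subst hu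
            have hgq : GoodSteps q'' :=
              ⟨fun x hx => hg.1 x (by simp [hx]),
               (List.isChain_cons.mp
                 (List.isChain_cons.mp (List.isChain_cons.mp hg.2).2).2).2⟩
            have hsq : q''.sum = 0 := by simp at hs; linarith
            have hbq : Bounded11 q'' := by
              intro i
              have h := hb (i + 3)
              simp only [List.take_succ_cons, List.sum_cons] at h
              constructor <;> linarith [h.1, h.2]
            obtain ⟨l3, hne3, hl3⟩ :=
              IH q''.length (by simp at hlen; omega) q'' rfl hgq hsq hbq
            obtain ⟨x, r, rfl⟩ :
                ∃ x r, l3 = x :: r := by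
              cases l3 with
              | nil => exact absurd rfl hne3
              | cons x r => exact ⟨x, r, rfl⟩
            exact ⟨(0,0)::x::r, by simp, by rw [pathOf_step3, hl3]⟩
    · -- first step is a down-step, forced to be -1 followed by an up-step
      have hs1 : s = -1 := by
        have := (hb 1).1
        simp only [List.take_succ_cons, List.take_zero, List.sum_cons, List.sum_nil,
          add_zero] at this
        omega
      subst hs1
      cases q with
      | nil => norm_num at hs
      | cons t q' =>
        have ht : t = 1 := by
          have := (List.isChain_cons.mp hg.2).1 t (by simp)
          rcases this with h | h
          · norm_num at h
          · exact h
        subst ht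
        have hgq : GoodSteps q' :=
          ⟨fun x hx => hg.1 x (by simp [hx]),
           (List.isChain_cons.mp (List.isChain_cons.mp hg.2).2).2⟩
        have hsq : q'.sum = 0 := by simp at hs; linarith
        have hbq : Bounded11 q' := by
          intro i
          have h := hb (i + 2)
          simp only [List.take_succ_cons, List.sum_cons] at h
          constructor <;> linarith [h.1, h.2]
        obtain ⟨l2, hl2ne, hl2⟩ :=
          IH q'.length (by simp at hlen; omega) q' rfl hgq hsq hbq
        obtain ⟨⟨a, b⟩, r, rfl⟩ :
            ∃ x r, l2 = x :: r := by
          cases l2 with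
          | nil => exact absurd rfl hl2ne
          | cons x r => exact ⟨x, r, rfl⟩
        exact ⟨(a+1,b)::r, by simp, by rw [pathOf_step1, hl2]⟩

/-! ### Surjectivity on the composition side -/

lemma comp_surj : ∀ n : ℕ, ∀ c : List ℕ, c.length = n → (∀ x ∈ c, 0 < x) →
    AltParity c → (∃ h, c.head? = some h ∧ Odd h) → (∃ l, c.getLast? = some l ∧ Even l) →
    ∃ l, l ≠ [] ∧ compOf l = c := by
  intro n
  induction n using Nat.strong_induction_on with
  | _ n IH =>
  intro c hlen hpos halt hhd hlast
  match c with
  | [] => obtain ⟨h, hh, _⟩ := hhd; simp at hh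
  | [o] =>
    obtain ⟨h, hh, hodd⟩ := hhd
    obtain ⟨l, hl, heven⟩ := hlast
    simp at hh hl
    subst hh; subst hl
    rw [Nat.odd_iff] at hodd
    rw [Nat.even_iff] at heven
    omega
  | o :: e :: rest =>
    obtain ⟨h, hh, hodd⟩ := hhd
    simp only [List.head?_cons, Option.some.injEq] at hh
    subst hh
    rw [Nat.odd_iff] at hodd
    have hoe : o % 2 ≠ e % 2 := (List.isChain_cons_cons.mp halt).1
    have hepos : 0 < e := hpos e (by simp)
    obtain ⟨a, rfl⟩ : ∃ a, o = 2*a+1 := ⟨o/2, by omega⟩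
    obtain ⟨b, rfl⟩ : ∃ b, e = 2*b+2 := ⟨e/2 - 1, by omega⟩
    cases rest with
    | nil => exact ⟨[(a,b)], by simp, rfl⟩
    | cons h' t =>
      have haltr : AltParity (h' :: t) := (List.isChain_cons_cons.mp (List.isChain_cons_cons.mp halt).2).2
      have hh'odd : Odd h' := by
        have := (List.isChain_cons_cons.mp (List.isChain_cons_cons.mp halt).2).1
        rw [Nat.odd_iff]
        omega
      have hlastr : ∃ l, (h' :: t).getLast? = some l ∧ Even l := by
        obtain ⟨l, hl, he⟩ := hlast
        refine ⟨l, ?_, he⟩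
        rw [← hl, List.getLast?_cons_cons, List.getLast?_cons_cons]
      obtain ⟨l', hne', hl'⟩ :=
        IH (h' :: t).length (by simp at hlen ⊢; omega) (h' :: t) rfl
          (fun x hx => hpos x (List.mem_cons_of_mem _ (List.mem_cons_of_mem _ hx))) haltr ⟨h', by simp, hh'odd⟩ hlastr
      exact ⟨(a,b) :: l', by simp, by rw [show compOf ((a,b)::l') = (2*a+1) :: (2*b+2) :: compOf l' from rfl, hl']⟩

/-! ### Assembling the bijection -/

/-- for every `n ≥ 0` there is a bijection between GDAP of length `n`
bounded by `y = -1` and `y = 1` and compositions of `n+3` whose first part is odd, whose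
last part is even, and with no two consecutive parts of the same parity. -/
theorem stmt16 : ∀ n : ℕ,
    Nonempty ({p : List ℤ // IsGDAP p ∧ Bounded11 p ∧ p.length = n} ≃
      {c : List ℕ // IsComposition c (n + 3) ∧ AltParity c ∧
        (∃ h, c.head? = some h ∧ Odd h) ∧ (∃ l, c.getLast? = some l ∧ Even l)}) := by
  intro n
  have e1 : {l : List (ℕ × ℕ) // l ≠ [] ∧ (pathOf l).length = n} ≃
      {p : List ℤ // IsGDAP p ∧ Bounded11 p ∧ p.length = n} := by
    refine Equiv.ofBijective
      (fun x => ⟨pathOf x.1,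
        ⟨⟨pathOf_mem x.1 x.2.1, pathOf_chain x.1 x.2.1⟩, pathOf_sum x.1 x.2.1⟩,
        pathOf_bounded x.1 x.2.1, x.2.2⟩) ⟨?_, ?_⟩
    · intro x y h
      apply Subtype.ext
      have hv : pathOf x.1 = pathOf y.1 := congrArg Subtype.val h
      have := congrArg decode hv
      rwa [decode_pathOf x.1 x.2.1, decode_pathOf y.1 y.2.1] at this
    · rintro ⟨p, ⟨hgood, hsum⟩, hb, hl⟩
      obtain ⟨l, hne, rfl⟩ := path_surj p.length p rfl hgood hsum hb
      exact ⟨⟨l, hne, hl⟩, rfl⟩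
  have e2 : {l : List (ℕ × ℕ) // l ≠ [] ∧ (pathOf l).length = n} ≃
      {c : List ℕ // IsComposition c (n + 3) ∧ AltParity c ∧
        (∃ h, c.head? = some h ∧ Odd h) ∧ (∃ l, c.getLast? = some l ∧ Even l)} := by
    refine Equiv.ofBijective
      (fun x => ⟨compOf x.1,
        ⟨compOf_pos x.1, by rw [compOf_sum x.1 x.2.1, x.2.2]⟩,
        compOf_alt x.1, ?_, compOf_last x.1 x.2.1⟩) ⟨?_, ?_⟩
    · obtain ⟨l, hne, hlen⟩ := x
      cases l with
      | nil => exact absurd rfl hne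
      | cons y r =>
        obtain ⟨a, b⟩ := y
        exact ⟨2*a+1, rfl, ⟨a, by ring⟩⟩
    · intro x y h
      apply Subtype.ext
      exact compOf_inj x.1 y.1 (congrArg Subtype.val h)
    · rintro ⟨c, ⟨hpos, hsum⟩, halt, hhd, hlast⟩
      obtain ⟨l, hne, rfl⟩ := comp_surj c.length c rfl hpos halt hhd hlast
      have hlen : (pathOf l).length = n := by
        have := compOf_sum l hne
        omega
      exact ⟨⟨l, hne, hlen⟩, rfl⟩
  exact ⟨e1.symm.trans e2⟩
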